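/- arXiv:0801.4218 — 4 statements merged into one kernel-verified Lean document; each statement's English description precedes it below -/
import Mathlib

section
/- For all vectors Z, W in H, one has M̂(N(Z ⊗ I) ⊗ N(W ⊗ I)) = 3(2g−2)(Z·W), where Z ⊗ I and W ⊗ I are regarded as elements of H^{⊗3}. -/
open TensorProduct

noncomputable section

/-- The intersection element `I = Σᵢ Xᵢ ⊗ X_{g+i} − X_{g+i} ⊗ Xᵢ ∈ H ⊗ H` associated to a
symplectic basis `X : Fin g ⊕ Fin g → H`. -/
def sympI {H : Type*} [AddCommGroup H] [Module ℂ H] {g : ℕ}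
    (X : Fin g ⊕ Fin g → H) : H ⊗[ℂ] H :=
  ∑ i : Fin g, (X (Sum.inl i) ⊗ₜ[ℂ] X (Sum.inr i) - X (Sum.inr i) ⊗ₜ[ℂ] X (Sum.inl i))

/-- for all `Z, W ∈ H`, `M̂(N(Z ⊗ I) ⊗ N(W ⊗ I)) = 3(2g−2)(Z·W)`. -/
theorem stmt8 {H : Type*} [AddCommGroup H] [Module ℂ H] {g : ℕ} (hg : 1 ≤ g)
    (m : H →ₗ[ℂ] H →ₗ[ℂ] ℂ) (halt : ∀ x : H, m x x = 0)
    (X : Module.Basis (Fin g ⊕ Fin g) ℂ H)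
    (hX1 : ∀ i j, m (X (Sum.inl i)) (X (Sum.inr j)) = if i = j then 1 else 0)
    (hX2 : ∀ i j, m (X (Sum.inl i)) (X (Sum.inl j)) = 0)
    (hX3 : ∀ i j, m (X (Sum.inr i)) (X (Sum.inr j)) = 0)
    -- the linear map `M̂ : H^{⊗6} → ℂ` with `M̂(Z₁⊗Z₂⊗Z₃⊗W₁⊗W₂⊗W₃) = (Z₁·W₁)(Z₂·W₂)(Z₃·W₃)`
    (Mhat : (H ⊗[ℂ] (H ⊗[ℂ] H)) ⊗[ℂ] (H ⊗[ℂ] (H ⊗[ℂ] H)) →ₗ[ℂ] ℂ)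
    (hMhat : ∀ Z1 Z2 Z3 W1 W2 W3 : H,
      Mhat ((Z1 ⊗ₜ[ℂ] (Z2 ⊗ₜ[ℂ] Z3)) ⊗ₜ[ℂ] (W1 ⊗ₜ[ℂ] (W2 ⊗ₜ[ℂ] W3)))
        = m Z1 W1 * m Z2 W2 * m Z3 W3)
    -- the cyclic symmetrizer `N = 1 + c + c²` on `H^{⊗3}`, `c(Z₁ ⊗ Z₂ ⊗ Z₃) = Z₃ ⊗ Z₁ ⊗ Z₂`
    (N : H ⊗[ℂ] (H ⊗[ℂ] H) →ₗ[ℂ] H ⊗[ℂ] (H ⊗[ℂ] H))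
    (hN : ∀ Z1 Z2 Z3 : H, N (Z1 ⊗ₜ[ℂ] (Z2 ⊗ₜ[ℂ] Z3)) =
      Z1 ⊗ₜ[ℂ] (Z2 ⊗ₜ[ℂ] Z3) + Z3 ⊗ₜ[ℂ] (Z1 ⊗ₜ[ℂ] Z2) + Z2 ⊗ₜ[ℂ] (Z3 ⊗ₜ[ℂ] Z1))
    (Z W : H) :
    Mhat (N (Z ⊗ₜ[ℂ] sympI (⇑X)) ⊗ₜ[ℂ] N (W ⊗ₜ[ℂ] sympI (⇑X)))
      = 3 * (2 * (g : ℂ) - 2) * m Z W := by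
  have hanti : ∀ x y : H, m x y = - m y x := by
    intro x y
    have h := halt (x + y)
    simp only [map_add, LinearMap.add_apply, halt, zero_add, add_zero] at h
    linear_combination h
  have hba : ∀ i j, m (X (Sum.inr i)) (X (Sum.inl j)) = if j = i then -1 else 0 := by
    intro i j
    rw [hanti, hX1]
    split <;> norm_num
  -- reproduction identity for the symplectic basis
  have hkey : ∑ i : Fin g, (m Z (X (Sum.inl i)) * m (X (Sum.inr i)) W
      - m Z (X (Sum.inr i)) * m (X (Sum.inl i)) W) = - m Z W := by
    let F : H →ₗ[ℂ] ℂ :=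
      { toFun := fun Z => ∑ i : Fin g, (m Z (X (Sum.inl i)) * m (X (Sum.inr i)) W
          - m Z (X (Sum.inr i)) * m (X (Sum.inl i)) W)
        map_add' := by
          intro x y
          rw [← Finset.sum_add_distrib]
          refine Finset.sum_congr rfl fun i _ => ?_
          simp only [map_add, LinearMap.add_apply]
          ring
        map_smul' := by
          intro c x
          simp only [map_smul, LinearMap.smul_apply, smul_eq_mul, RingHom.id_apply,
            Finset.mul_sum]
          exact Finset.sum_congr rfl fun i _ => by ring }
    have hF : F = -((LinearMap.flip m) W) := by
      apply X.ext
      rintro (k | k) <;>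
        simp [F, hX1, hX2, hX3, hba, LinearMap.flip_apply, mul_ite, ite_mul,
          Finset.sum_ite_eq, Finset.sum_ite_eq']
    exact LinearMap.congr_fun hF Z
  rw [Finset.sum_sub_distrib] at hkey
  simp only [sympI, tmul_sum, tmul_sub, map_sum, map_sub, hN, sum_tmul, add_tmul, sub_tmul,
    tmul_add, map_add, hMhat, hX1, hX2, hX3, hba, mul_ite, ite_mul, mul_zero, zero_mul,
    mul_one, one_mul, mul_neg, neg_mul, neg_neg, zero_sub, sub_zero, add_zero, zero_add,
    neg_zero, Finset.sum_add_distrib, Finset.sum_sub_distrib, Finset.sum_ite_eq,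
    Finset.sum_ite_eq', Finset.mem_univ, if_true, Finset.sum_const_zero, Finset.sum_neg_distrib]
  have e1 : ∑ x : Fin g, m (X (Sum.inr x)) W * m Z (X (Sum.inl x))
      = ∑ x : Fin g, m Z (X (Sum.inl x)) * m (X (Sum.inr x)) W :=
    Finset.sum_congr rfl fun _ _ => mul_comm _ _
  have e2 : ∑ x : Fin g, m (X (Sum.inl x)) W * m Z (X (Sum.inr x))
      = ∑ x : Fin g, m Z (X (Sum.inr x)) * m (X (Sum.inl x)) W :=
    Finset.sum_congr rfl fun _ _ => mul_comm _ _
  have hC : ∑ _x : Fin g, m Z W = (g : ℂ) * m Z W := by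
    simp [Finset.sum_const, mul_comm]
  rw [e1, e2, hC]
  linear_combination (6 : ℂ) * hkey
end
end

section
/- Assume g ≥ 2. For all decomposable elements z = Z_1 ∧ Z_2 ∧ Z_3 and w = W_1 ∧ W_2 ∧ W_3 of ⋀³H, with w^H := q_H(p_H(w)) and z^H := q_H(p_H(z)), one has M̂(ι(z) ⊗ ι(w^H)) = (3/(2g−2)) M_1(z ⊗ w) and M̂(ι(z^H) ⊗ ι(w)) = (3/(2g−2)) M_1(z ⊗ w). -/
open TensorProduct

noncomputable section

/-- The wedge product `v 0 ∧ v 1 ∧ v 2` as an element of the third exterior power `⋀³H`. -/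
def wedge3 {H : Type*} [AddCommGroup H] [Module ℂ H] (v : Fin 3 → H) : ⋀[ℂ]^3 H :=
  ⟨ExteriorAlgebra.ιMulti ℂ 3 v, ExteriorAlgebra.ιMulti_range ℂ 3 ⟨v, rfl⟩⟩

open Equiv in
lemma sumPerm3 {M : Type*} [AddCommMonoid M] (f : Equiv.Perm (Fin 3) → M) :
    ∑ σ : Equiv.Perm (Fin 3), f σ =
      f 1 + f (swap 0 1) + f (swap 0 2) + f (swap 1 2)
        + f (swap 0 1 * swap 1 2) + f (swap 1 2 * swap 0 1) := by
  rw [show (Finset.univ : Finset (Equiv.Perm (Fin 3))) =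
    {1, swap 0 1, swap 0 2, swap 1 2, swap 0 1 * swap 1 2, swap 1 2 * swap 0 1} from by decide]
  rw [Finset.sum_insert (by decide), Finset.sum_insert (by decide), Finset.sum_insert (by decide),
    Finset.sum_insert (by decide), Finset.sum_insert (by decide), Finset.sum_singleton]
  abel

/-- assume `g ≥ 2`.  For all decomposable `z = Z₁ ∧ Z₂ ∧ Z₃` and
`w = W₁ ∧ W₂ ∧ W₃` in `⋀³H`, with `w^H := q_H(p_H(w))` and `z^H := q_H(p_H(z))`, one has
`M̂(ι(z) ⊗ ι(w^H)) = (3/(2g−2)) M₁(z ⊗ w)` and `M̂(ι(z^H) ⊗ ι(w)) = (3/(2g−2)) M₁(z ⊗ w)`,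
where `M₁(z ⊗ w) = (m ⊗ m ⊗ m)(ι(z) ⊗ ι(w))`. -/
theorem stmt9 {H : Type*} [AddCommGroup H] [Module ℂ H] {g : ℕ} (hg : 2 ≤ g)
    (m : H →ₗ[ℂ] H →ₗ[ℂ] ℂ) (halt : ∀ x : H, m x x = 0)
    (X : Module.Basis (Fin g ⊕ Fin g) ℂ H)
    (hX1 : ∀ i j, m (X (Sum.inl i)) (X (Sum.inr j)) = if i = j then 1 else 0)
    (hX2 : ∀ i j, m (X (Sum.inl i)) (X (Sum.inl j)) = 0)
    (hX3 : ∀ i j, m (X (Sum.inr i)) (X (Sum.inr j)) = 0)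
    -- `(m ⊗ id_H) : H^{⊗3} → H`, contraction of the first two tensor factors by `m`
    (c12 : H ⊗[ℂ] (H ⊗[ℂ] H) →ₗ[ℂ] H)
    (hc12 : ∀ Z1 Z2 Z3 : H, c12 (Z1 ⊗ₜ[ℂ] (Z2 ⊗ₜ[ℂ] Z3)) = m Z1 Z2 • Z3)
    -- the embedding `ι : ⋀³H → H^{⊗3}`
    (ι : ⋀[ℂ]^3 H →ₗ[ℂ] H ⊗[ℂ] (H ⊗[ℂ] H))
    (hι : ∀ v : Fin 3 → H, ι (wedge3 v) =
      ∑ σ : Equiv.Perm (Fin 3),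
        (Equiv.Perm.sign σ : ℤ) • (v (σ 0) ⊗ₜ[ℂ] (v (σ 1) ⊗ₜ[ℂ] v (σ 2))))
    -- the linear map `M̂ : H^{⊗6} → ℂ` with `M̂(Z₁⊗Z₂⊗Z₃⊗W₁⊗W₂⊗W₃) = (Z₁·W₁)(Z₂·W₂)(Z₃·W₃)`
    (Mhat : (H ⊗[ℂ] (H ⊗[ℂ] H)) ⊗[ℂ] (H ⊗[ℂ] (H ⊗[ℂ] H)) →ₗ[ℂ] ℂ)
    (hMhat : ∀ Z1 Z2 Z3 W1 W2 W3 : H,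
      Mhat ((Z1 ⊗ₜ[ℂ] (Z2 ⊗ₜ[ℂ] Z3)) ⊗ₜ[ℂ] (W1 ⊗ₜ[ℂ] (W2 ⊗ₜ[ℂ] W3)))
        = m Z1 W1 * m Z2 W2 * m Z3 W3)
    -- the linear map `m ⊗ m ⊗ m : H^{⊗6} → ℂ` with
    -- `(m ⊗ m ⊗ m)(v₁ ⊗ ⋯ ⊗ v₆) = (v₁·v₂)(v₃·v₄)(v₅·v₆)`, so that
    -- `M₁(z ⊗ w) = (m ⊗ m ⊗ m)(ι(z) ⊗ ι(w))`
    (mmm : (H ⊗[ℂ] (H ⊗[ℂ] H)) ⊗[ℂ] (H ⊗[ℂ] (H ⊗[ℂ] H)) →ₗ[ℂ] ℂ)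
    (hmmm : ∀ v1 v2 v3 v4 v5 v6 : H,
      mmm ((v1 ⊗ₜ[ℂ] (v2 ⊗ₜ[ℂ] v3)) ⊗ₜ[ℂ] (v4 ⊗ₜ[ℂ] (v5 ⊗ₜ[ℂ] v6)))
        = m v1 v2 * m v3 v4 * m v5 v6)
    -- `q_H : H → ⋀³H`, `q_H(Z) = Z ∧ I = Σᵢ Z ∧ Xᵢ ∧ X_{g+i}`
    (qH : H → ⋀[ℂ]^3 H)
    (hqH : ∀ Z : H, qH Z = ∑ i : Fin g, wedge3 ![Z, X (Sum.inl i), X (Sum.inr i)])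
    -- `p_H : ⋀³H → H`, `p_H(z) = (1/(2g−2)) (m ⊗ id_H)(ι(z))`
    (pH : ⋀[ℂ]^3 H → H)
    (hpH : ∀ z : ⋀[ℂ]^3 H, pH z = (1 / (2 * (g : ℂ) - 2)) • c12 (ι z))
    (Z1 Z2 Z3 W1 W2 W3 : H) :
    Mhat (ι (wedge3 ![Z1, Z2, Z3]) ⊗ₜ[ℂ] ι (qH (pH (wedge3 ![W1, W2, W3]))))
      = (3 / (2 * (g : ℂ) - 2)) * mmm (ι (wedge3 ![Z1, Z2, Z3]) ⊗ₜ[ℂ] ι (wedge3 ![W1, W2, W3])) ∧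
    Mhat (ι (qH (pH (wedge3 ![Z1, Z2, Z3]))) ⊗ₜ[ℂ] ι (wedge3 ![W1, W2, W3]))
      = (3 / (2 * (g : ℂ) - 2)) * mmm (ι (wedge3 ![Z1, Z2, Z3]) ⊗ₜ[ℂ] ι (wedge3 ![W1, W2, W3])) := by
  
  -- skew-symmetry of m
  have skew : ∀ x y : H, m x y = -m y x := by
    intro x y
    have h := halt (x + y)
    simp only [map_add, LinearMap.add_apply, halt x, halt y, zero_add, add_zero] at h
    linear_combination h
  -- completeness relation
  have compl : ∀ A B : H,
      (∑ i : Fin g, (m A (X (Sum.inl i)) * m B (X (Sum.inr i))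
        - m A (X (Sum.inr i)) * m B (X (Sum.inl i)))) = m A B := by
    intro A
    have key : (∑ i : Fin g, (m A (X (Sum.inl i)) • m.flip (X (Sum.inr i))
        - m A (X (Sum.inr i)) • m.flip (X (Sum.inl i)))) = m A := by
      apply X.ext
      rintro (j | j)
      · simp only [LinearMap.sum_apply, LinearMap.sub_apply, LinearMap.smul_apply,
          LinearMap.flip_apply, smul_eq_mul, hX1, hX2, mul_zero, sub_zero, mul_ite, mul_one]
        simp
      · have hval : ∀ i : Fin g, m (X (Sum.inr j)) (X (Sum.inl i)) = -(if i = j then 1 else 0) := by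
          intro i; rw [skew, hX1]
        simp only [LinearMap.sum_apply, LinearMap.sub_apply, LinearMap.smul_apply,
          LinearMap.flip_apply, smul_eq_mul, hX3, hval, mul_zero, zero_sub, mul_neg, mul_ite,
          mul_one, neg_neg]
        simp
    intro B
    have hB := LinearMap.congr_fun key B
    simpa only [LinearMap.sum_apply, LinearMap.sub_apply, LinearMap.smul_apply,
      LinearMap.flip_apply, smul_eq_mul] using hB
  have compl2 : ∀ A B : H,
      (∑ i : Fin g, (m (X (Sum.inl i)) A * m (X (Sum.inr i)) B
        - m (X (Sum.inr i)) A * m (X (Sum.inl i)) B)) = m A B := by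
    intro A B
    have h : ∀ i : Fin g, m (X (Sum.inl i)) A * m (X (Sum.inr i)) B
        - m (X (Sum.inr i)) A * m (X (Sum.inl i)) B
        = m A (X (Sum.inl i)) * m B (X (Sum.inr i))
          - m A (X (Sum.inr i)) * m B (X (Sum.inl i)) := by
      intro i
      rw [skew (X (Sum.inl i)) A, skew (X (Sum.inr i)) B, skew (X (Sum.inr i)) A,
        skew (X (Sum.inl i)) B]
      ring
    rw [Finset.sum_congr rfl fun i _ => h i, compl]
  -- explicit form of ι on wedges
  have hι' : ∀ v : Fin 3 → H, ι (wedge3 v) =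
      v 0 ⊗ₜ[ℂ] (v 1 ⊗ₜ[ℂ] v 2) - v 1 ⊗ₜ[ℂ] (v 0 ⊗ₜ[ℂ] v 2)
        - v 2 ⊗ₜ[ℂ] (v 1 ⊗ₜ[ℂ] v 0) - v 0 ⊗ₜ[ℂ] (v 2 ⊗ₜ[ℂ] v 1)
        + v 1 ⊗ₜ[ℂ] (v 2 ⊗ₜ[ℂ] v 0) + v 2 ⊗ₜ[ℂ] (v 0 ⊗ₜ[ℂ] v 1) := by
    intro v
    rw [hι, sumPerm3]
    have e1 : ((Equiv.Perm.sign (1 : Equiv.Perm (Fin 3)) : ℤ)) = 1 := by decide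
    have e2 : ((Equiv.Perm.sign (Equiv.swap (0:Fin 3) 1) : ℤ)) = -1 := by decide
    have e3 : ((Equiv.Perm.sign (Equiv.swap (0:Fin 3) 2) : ℤ)) = -1 := by decide
    have e4 : ((Equiv.Perm.sign (Equiv.swap (1:Fin 3) 2) : ℤ)) = -1 := by decide
    have e5 : ((Equiv.Perm.sign (Equiv.swap (0:Fin 3) 1 * Equiv.swap 1 2) : ℤ)) = 1 := by decide
    have e6 : ((Equiv.Perm.sign (Equiv.swap (1:Fin 3) 2 * Equiv.swap 0 1) : ℤ)) = 1 := by decide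
    simp only [e1, e2, e3, e4, e5, e6, one_smul, neg_smul]
    simp only [Equiv.Perm.one_apply, Equiv.Perm.mul_apply, Equiv.swap_apply_def]
    norm_num [show ((2:Fin 3) ≠ 0) from by decide, show ((2:Fin 3) ≠ 1) from by decide,
      show ((1:Fin 3) ≠ 0) from by decide, show ((1:Fin 3) ≠ 2) from by decide,
      show ((0:Fin 3) ≠ 1) from by decide, show ((0:Fin 3) ≠ 2) from by decide]
    abel
  -- per-index computation, Mhat with q_H on the right
  have perI : ∀ (v : Fin 3 → H) (P : H) (i : Fin g),
      Mhat (ι (wedge3 v) ⊗ₜ[ℂ] ι (wedge3 ![P, X (Sum.inl i), X (Sum.inr i)])) =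
        6 * (m (v 0) P * (m (v 1) (X (Sum.inl i)) * m (v 2) (X (Sum.inr i))
              - m (v 1) (X (Sum.inr i)) * m (v 2) (X (Sum.inl i)))
          - m (v 1) P * (m (v 0) (X (Sum.inl i)) * m (v 2) (X (Sum.inr i))
              - m (v 0) (X (Sum.inr i)) * m (v 2) (X (Sum.inl i)))
          + m (v 2) P * (m (v 0) (X (Sum.inl i)) * m (v 1) (X (Sum.inr i))
              - m (v 0) (X (Sum.inr i)) * m (v 1) (X (Sum.inl i)))) := by
    intro v P i
    rw [hι' v, hι' ![P, X (Sum.inl i), X (Sum.inr i)]]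
    simp only [Matrix.cons_val_zero, Matrix.cons_val_one, Matrix.head_cons, Matrix.cons_val_two,
      Matrix.tail_cons]
    simp only [tmul_sub, tmul_add, sub_tmul, add_tmul, map_sub, map_add, hMhat]
    ring
  -- per-index computation, Mhat with q_H on the left
  have perI' : ∀ (w : Fin 3 → H) (P : H) (i : Fin g),
      Mhat (ι (wedge3 ![P, X (Sum.inl i), X (Sum.inr i)]) ⊗ₜ[ℂ] ι (wedge3 w)) =
        6 * (m P (w 0) * (m (X (Sum.inl i)) (w 1) * m (X (Sum.inr i)) (w 2)
              - m (X (Sum.inr i)) (w 1) * m (X (Sum.inl i)) (w 2))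
          - m P (w 1) * (m (X (Sum.inl i)) (w 0) * m (X (Sum.inr i)) (w 2)
              - m (X (Sum.inr i)) (w 0) * m (X (Sum.inl i)) (w 2))
          + m P (w 2) * (m (X (Sum.inl i)) (w 0) * m (X (Sum.inr i)) (w 1)
              - m (X (Sum.inr i)) (w 0) * m (X (Sum.inl i)) (w 1))) := by
    intro w P i
    rw [hι' w, hι' ![P, X (Sum.inl i), X (Sum.inr i)]]
    simp only [Matrix.cons_val_zero, Matrix.cons_val_one, Matrix.head_cons, Matrix.cons_val_two,
      Matrix.tail_cons]
    simp only [tmul_sub, tmul_add, sub_tmul, add_tmul, map_sub, map_add, hMhat]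
    ring
  have E1 : ∀ (v : Fin 3 → H) (P : H),
      Mhat (ι (wedge3 v) ⊗ₜ[ℂ] ι (qH P)) =
        6 * (m (v 0) P * m (v 1) (v 2) - m (v 1) P * m (v 0) (v 2)
          + m (v 2) P * m (v 0) (v 1)) := by
    intro v P
    rw [hqH, map_sum, tmul_sum, map_sum,
      Finset.sum_congr rfl fun i _ => perI v P i,
      ← Finset.mul_sum, Finset.sum_add_distrib, Finset.sum_sub_distrib,
      ← Finset.mul_sum, ← Finset.mul_sum, ← Finset.mul_sum,
      compl (v 1) (v 2), compl (v 0) (v 2), compl (v 0) (v 1)]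
  have E2 : ∀ (w : Fin 3 → H) (P : H),
      Mhat (ι (qH P) ⊗ₜ[ℂ] ι (wedge3 w)) =
        6 * (m P (w 0) * m (w 1) (w 2) - m P (w 1) * m (w 0) (w 2)
          + m P (w 2) * m (w 0) (w 1)) := by
    intro w P
    rw [hqH, map_sum, sum_tmul, map_sum,
      Finset.sum_congr rfl fun i _ => perI' w P i,
      ← Finset.mul_sum, Finset.sum_add_distrib, Finset.sum_sub_distrib,
      ← Finset.mul_sum, ← Finset.mul_sum, ← Finset.mul_sum,
      compl2 (w 1) (w 2), compl2 (w 0) (w 2), compl2 (w 0) (w 1)]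
  -- explicit form of pH on wedges
  have hPgen : ∀ v : Fin 3 → H, pH (wedge3 v) =
      (1 / (2 * (g:ℂ) - 2)) • ((m (v 0) (v 1)) • v 2 - (m (v 1) (v 0)) • v 2
        - (m (v 2) (v 1)) • v 0 - (m (v 0) (v 2)) • v 1
        + (m (v 1) (v 2)) • v 0 + (m (v 2) (v 0)) • v 1) := by
    intro v
    rw [hpH, hι']
    simp only [map_sub, map_add, hc12]
  have hskewW1 : m W2 W1 = -m W1 W2 := skew _ _
  have hskewW2 : m W3 W1 = -m W1 W3 := skew _ _
  have hskewW3 : m W3 W2 = -m W2 W3 := skew _ _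
  have hskewZ1 : m Z2 Z1 = -m Z1 Z2 := skew _ _
  have hskewZ2 : m Z3 Z1 = -m Z1 Z3 := skew _ _
  have hskewZ3 : m Z3 Z2 = -m Z2 Z3 := skew _ _
  constructor
  · rw [E1, hPgen, hι' ![Z1, Z2, Z3], hι' ![W1, W2, W3]]
    simp only [Matrix.cons_val_zero, Matrix.cons_val_one, Matrix.head_cons, Matrix.cons_val_two,
      Matrix.tail_cons, map_smul, map_sub, map_add, smul_eq_mul,
      tmul_sub, tmul_add, sub_tmul, add_tmul, hmmm]
    simp only [hskewW1, hskewW2, hskewW3, hskewZ1, hskewZ2, hskewZ3]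
    ring
  · rw [E2, hPgen, hι' ![Z1, Z2, Z3], hι' ![W1, W2, W3]]
    simp only [Matrix.cons_val_zero, Matrix.cons_val_one, Matrix.head_cons, Matrix.cons_val_two,
      Matrix.tail_cons, map_smul, map_sub, map_add, LinearMap.smul_apply, LinearMap.sub_apply,
      LinearMap.add_apply, smul_eq_mul, tmul_sub, tmul_add, sub_tmul, add_tmul, hmmm]
    simp only [hskewW1, hskewW2, hskewW3, hskewZ1, hskewZ2, hskewZ3]
    ring
end
end

section
/- Assume g ≥ 2. For all decomposable elements z = Z_1 ∧ Z_2 ∧ Z_3 and w = W_1 ∧ W_2 ∧ W_3 of ⋀³H, with z^H := q_H(p_H(z)) and w^H := q_H(p_H(w)), one has M̂(ι(z^H) ⊗ ι(w^H)) = (3/(2g−2)) M_1(z ⊗ w). -/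
open TensorProduct

noncomputable section

lemma sum_perm3 {M : Type*} [AddCommMonoid M] (f : Equiv.Perm (Fin 3) → M) :
    ∑ σ : Equiv.Perm (Fin 3), f σ =
      f 1 + f (Equiv.swap 0 1) + f (Equiv.swap 0 2) + f (Equiv.swap 1 2)
        + f (finRotate 3) + f (finRotate 3)⁻¹ := by
  rw [show (Finset.univ : Finset (Equiv.Perm (Fin 3))) =
    {1, Equiv.swap 0 1, Equiv.swap 0 2, Equiv.swap 1 2, finRotate 3, (finRotate 3)⁻¹} from by decide]
  rw [Finset.sum_insert (by decide), Finset.sum_insert (by decide), Finset.sum_insert (by decide),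
    Finset.sum_insert (by decide), Finset.sum_insert (by decide), Finset.sum_singleton]
  abel

lemma pf_a0 : (Equiv.swap (0:Fin 3) 1) 0 = 1 := by decide
lemma pf_a1 : (Equiv.swap (0:Fin 3) 1) 1 = 0 := by decide
lemma pf_a2 : (Equiv.swap (0:Fin 3) 1) 2 = 2 := by decide
lemma pf_b0 : (Equiv.swap (0:Fin 3) 2) 0 = 2 := by decide
lemma pf_b1 : (Equiv.swap (0:Fin 3) 2) 1 = 1 := by decide
lemma pf_b2 : (Equiv.swap (0:Fin 3) 2) 2 = 0 := by decide
lemma pf_c0 : (Equiv.swap (1:Fin 3) 2) 0 = 0 := by decide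
lemma pf_c1 : (Equiv.swap (1:Fin 3) 2) 1 = 2 := by decide
lemma pf_c2 : (Equiv.swap (1:Fin 3) 2) 2 = 1 := by decide
lemma pf_d0 : (finRotate 3) (0:Fin 3) = 1 := by decide
lemma pf_d1 : (finRotate 3) (1:Fin 3) = 2 := by decide
lemma pf_d2 : (finRotate 3) (2:Fin 3) = 0 := by decide
lemma pf_e0 : (finRotate 3)⁻¹ (0:Fin 3) = 2 := by decide
lemma pf_e1 : (finRotate 3)⁻¹ (1:Fin 3) = 0 := by decide
lemma pf_e2 : (finRotate 3)⁻¹ (2:Fin 3) = 1 := by decide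
lemma pf_s1 : (Equiv.Perm.sign (1 : Equiv.Perm (Fin 3)) : ℤ) = 1 := by decide
lemma pf_sa : (Equiv.Perm.sign (Equiv.swap (0:Fin 3) 1) : ℤ) = -1 := by decide
lemma pf_sb : (Equiv.Perm.sign (Equiv.swap (0:Fin 3) 2) : ℤ) = -1 := by decide
lemma pf_sc : (Equiv.Perm.sign (Equiv.swap (1:Fin 3) 2) : ℤ) = -1 := by decide
lemma pf_sd : (Equiv.Perm.sign (finRotate 3 : Equiv.Perm (Fin 3)) : ℤ) = 1 := by decide
lemma pf_se : (Equiv.Perm.sign ((finRotate 3)⁻¹ : Equiv.Perm (Fin 3)) : ℤ) = 1 := by decide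

/-- assume `g ≥ 2`.  For all decomposable `z = Z₁ ∧ Z₂ ∧ Z₃` and
`w = W₁ ∧ W₂ ∧ W₃` in `⋀³H`, with `z^H := q_H(p_H(z))` and `w^H := q_H(p_H(w))`, one has
`M̂(ι(z^H) ⊗ ι(w^H)) = (3/(2g−2)) M₁(z ⊗ w)`, where `M₁(z ⊗ w) = (m ⊗ m ⊗ m)(ι(z) ⊗ ι(w))`. -/
theorem stmt10 {H : Type*} [AddCommGroup H] [Module ℂ H] {g : ℕ} (hg : 2 ≤ g)
    (m : H →ₗ[ℂ] H →ₗ[ℂ] ℂ) (halt : ∀ x : H, m x x = 0)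
    (X : Module.Basis (Fin g ⊕ Fin g) ℂ H)
    (hX1 : ∀ i j, m (X (Sum.inl i)) (X (Sum.inr j)) = if i = j then 1 else 0)
    (hX2 : ∀ i j, m (X (Sum.inl i)) (X (Sum.inl j)) = 0)
    (hX3 : ∀ i j, m (X (Sum.inr i)) (X (Sum.inr j)) = 0)
    -- `(m ⊗ id_H) : H^{⊗3} → H`, contraction of the first two tensor factors by `m`
    (c12 : H ⊗[ℂ] (H ⊗[ℂ] H) →ₗ[ℂ] H)
    (hc12 : ∀ Z1 Z2 Z3 : H, c12 (Z1 ⊗ₜ[ℂ] (Z2 ⊗ₜ[ℂ] Z3)) = m Z1 Z2 • Z3)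
    -- the embedding `ι : ⋀³H → H^{⊗3}`
    (ι : ⋀[ℂ]^3 H →ₗ[ℂ] H ⊗[ℂ] (H ⊗[ℂ] H))
    (hι : ∀ v : Fin 3 → H, ι (wedge3 v) =
      ∑ σ : Equiv.Perm (Fin 3),
        (Equiv.Perm.sign σ : ℤ) • (v (σ 0) ⊗ₜ[ℂ] (v (σ 1) ⊗ₜ[ℂ] v (σ 2))))
    -- the linear map `M̂ : H^{⊗6} → ℂ` with `M̂(Z₁⊗Z₂⊗Z₃⊗W₁⊗W₂⊗W₃) = (Z₁·W₁)(Z₂·W₂)(Z₃·W₃)`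
    (Mhat : (H ⊗[ℂ] (H ⊗[ℂ] H)) ⊗[ℂ] (H ⊗[ℂ] (H ⊗[ℂ] H)) →ₗ[ℂ] ℂ)
    (hMhat : ∀ Z1 Z2 Z3 W1 W2 W3 : H,
      Mhat ((Z1 ⊗ₜ[ℂ] (Z2 ⊗ₜ[ℂ] Z3)) ⊗ₜ[ℂ] (W1 ⊗ₜ[ℂ] (W2 ⊗ₜ[ℂ] W3)))
        = m Z1 W1 * m Z2 W2 * m Z3 W3)
    -- the linear map `m ⊗ m ⊗ m : H^{⊗6} → ℂ` with
    -- `(m ⊗ m ⊗ m)(v₁ ⊗ ⋯ ⊗ v₆) = (v₁·v₂)(v₃·v₄)(v₅·v₆)`, so that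
    -- `M₁(z ⊗ w) = (m ⊗ m ⊗ m)(ι(z) ⊗ ι(w))`
    (mmm : (H ⊗[ℂ] (H ⊗[ℂ] H)) ⊗[ℂ] (H ⊗[ℂ] (H ⊗[ℂ] H)) →ₗ[ℂ] ℂ)
    (hmmm : ∀ v1 v2 v3 v4 v5 v6 : H,
      mmm ((v1 ⊗ₜ[ℂ] (v2 ⊗ₜ[ℂ] v3)) ⊗ₜ[ℂ] (v4 ⊗ₜ[ℂ] (v5 ⊗ₜ[ℂ] v6)))
        = m v1 v2 * m v3 v4 * m v5 v6)
    -- `q_H : H → ⋀³H`, `q_H(Z) = Z ∧ I = Σᵢ Z ∧ Xᵢ ∧ X_{g+i}`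
    (qH : H → ⋀[ℂ]^3 H)
    (hqH : ∀ Z : H, qH Z = ∑ i : Fin g, wedge3 ![Z, X (Sum.inl i), X (Sum.inr i)])
    -- `p_H : ⋀³H → H`, `p_H(z) = (1/(2g−2)) (m ⊗ id_H)(ι(z))`
    (pH : ⋀[ℂ]^3 H → H)
    (hpH : ∀ z : ⋀[ℂ]^3 H, pH z = (1 / (2 * (g : ℂ) - 2)) • c12 (ι z))
    (Z1 Z2 Z3 W1 W2 W3 : H) :
    Mhat (ι (qH (pH (wedge3 ![Z1, Z2, Z3]))) ⊗ₜ[ℂ] ι (qH (pH (wedge3 ![W1, W2, W3]))))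
      = (3 / (2 * (g : ℂ) - 2)) * mmm (ι (wedge3 ![Z1, Z2, Z3]) ⊗ₜ[ℂ] ι (wedge3 ![W1, W2, W3])) := by
  classical
  have hsk : ∀ x y : H, m y x = -m x y := by
    intro x y
    have h := halt (x + y)
    simp only [map_add, LinearMap.add_apply, halt] at h
    linear_combination h
  have hX1' : ∀ i j, m (X (Sum.inr i)) (X (Sum.inl j)) = if i = j then (-1:ℂ) else 0 := by
    intro i j
    rw [hsk, hX1 j i]
    by_cases h : i = j <;> simp [h, eq_comm]
  have expand : ∀ a b : Fin 3 → H, Mhat (ι (wedge3 a) ⊗ₜ[ℂ] ι (wedge3 b)) =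
      ∑ σ : Equiv.Perm (Fin 3), ∑ τ : Equiv.Perm (Fin 3),
        ((Equiv.Perm.sign σ : ℤ) : ℂ) * ((Equiv.Perm.sign τ : ℤ) : ℂ) *
          (m (a (σ 0)) (b (τ 0)) * m (a (σ 1)) (b (τ 1)) * m (a (σ 2)) (b (τ 2))) := by
    intro a b
    rw [hι, hι]
    simp only [← Int.cast_smul_eq_zsmul ℂ, TensorProduct.sum_tmul, TensorProduct.tmul_sum,
      TensorProduct.smul_tmul', TensorProduct.tmul_smul, map_sum, map_smul,
      LinearMap.smul_apply, smul_eq_mul, hMhat]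
    rw [Finset.sum_comm]
    refine Finset.sum_congr rfl fun σ _ => Finset.sum_congr rfl fun τ _ => by ring
  have hmc : ∀ v w : Fin 3 → H, mmm (ι (wedge3 v) ⊗ₜ[ℂ] ι (wedge3 w))
      = m (c12 (ι (wedge3 v))) (c12 (ι (wedge3 w))) := by
    intro v w
    have hL : mmm (ι (wedge3 v) ⊗ₜ[ℂ] ι (wedge3 w)) =
        ∑ σ : Equiv.Perm (Fin 3), ∑ τ : Equiv.Perm (Fin 3),
          ((Equiv.Perm.sign σ : ℤ) : ℂ) * ((Equiv.Perm.sign τ : ℤ) : ℂ) *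
            (m (v (σ 0)) (v (σ 1)) * m (v (σ 2)) (w (τ 0)) * m (w (τ 1)) (w (τ 2))) := by
      rw [hι, hι]
      simp only [← Int.cast_smul_eq_zsmul ℂ, TensorProduct.sum_tmul, TensorProduct.tmul_sum,
        TensorProduct.smul_tmul', TensorProduct.tmul_smul, map_sum, map_smul,
        LinearMap.smul_apply, smul_eq_mul, hmmm]
      rw [Finset.sum_comm]
      refine Finset.sum_congr rfl fun σ _ => Finset.sum_congr rfl fun τ _ => by ring
    rw [hL, hι, hι]
    simp only [← Int.cast_smul_eq_zsmul ℂ, map_sum, map_smul, hc12, LinearMap.sum_apply,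
      LinearMap.smul_apply, smul_eq_mul]
    simp only [sum_perm3, pf_a0, pf_a1, pf_a2, pf_b0, pf_b1, pf_b2, pf_c0, pf_c1, pf_c2,
      pf_d0, pf_d1, pf_d2, pf_e0, pf_e1, pf_e2, pf_s1, pf_sa, pf_sb, pf_sc, pf_sd, pf_se,
      Equiv.Perm.one_apply, Int.cast_one, Int.cast_neg]
    ring
  have key : ∀ A B : H, ∑ i : Fin g, (m A (X (Sum.inl i)) * m (X (Sum.inr i)) B
      - m A (X (Sum.inr i)) * m (X (Sum.inl i)) B) = - m A B := by
    intro A B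
    have h1 : ∀ i : Fin g, m (X (Sum.inl i)) B = X.repr B (Sum.inr i) := by
      intro i
      conv_lhs => rw [← X.sum_repr B]
      simp [-Module.Basis.sum_repr, Fintype.sum_sum_type, hX1, hX2, mul_ite, Finset.sum_ite_eq]
    have h2 : ∀ i : Fin g, m (X (Sum.inr i)) B = - X.repr B (Sum.inl i) := by
      intro i
      conv_lhs => rw [← X.sum_repr B]
      simp [-Module.Basis.sum_repr, Fintype.sum_sum_type, hX1', hX3, mul_ite, Finset.sum_ite_eq]
    have hAB : m A B = ∑ i : Fin g, (X.repr B (Sum.inl i) * m A (X (Sum.inl i))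
        + X.repr B (Sum.inr i) * m A (X (Sum.inr i))) := by
      conv_lhs => rw [← X.sum_repr B]
      simp [-Module.Basis.sum_repr, Fintype.sum_sum_type, ← Finset.sum_add_distrib, smul_eq_mul, mul_comm]
    simp only [h1, h2, hAB]
    rw [eq_neg_iff_add_eq_zero, ← Finset.sum_add_distrib]
    exact Finset.sum_eq_zero fun i _ => by ring
  have main : ∀ A B : H, Mhat (ι (qH A) ⊗ₜ[ℂ] ι (qH B)) = (6*(g:ℂ)-6) * m A B := by
    intro A B
    rw [hqH, hqH, map_sum, map_sum, TensorProduct.sum_tmul, map_sum]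
    simp only [TensorProduct.tmul_sum, map_sum, expand]
    simp only [sum_perm3, pf_a0, pf_a1, pf_a2, pf_b0, pf_b1, pf_b2, pf_c0, pf_c1, pf_c2,
      pf_d0, pf_d1, pf_d2, pf_e0, pf_e1, pf_e2, pf_s1, pf_sa, pf_sb, pf_sc, pf_sd, pf_se,
      Equiv.Perm.one_apply, Int.cast_one, Int.cast_neg, Matrix.cons_val_zero,
      Matrix.cons_val_one, Matrix.cons_val_two, Matrix.head_cons, Matrix.tail_cons,
      hX1, hX2, hX3, hX1']
    simp only [mul_ite, ite_mul, mul_zero, zero_mul, mul_one, one_mul, mul_neg, neg_mul,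
      neg_neg, neg_zero, Finset.sum_ite_eq, Finset.sum_ite_eq', Finset.mem_univ, if_true,
      Finset.sum_sub_distrib, Finset.sum_add_distrib, Finset.sum_neg_distrib]
    simp only [Finset.sum_const_zero, add_zero, zero_add, Finset.sum_const, Finset.card_univ,
      Fintype.card_fin, nsmul_eq_mul]
    have c1 : ∑ x : Fin g, (m (X (Sum.inr x))) B * (m A) (X (Sum.inl x))
        = ∑ x : Fin g, (m A) (X (Sum.inl x)) * (m (X (Sum.inr x))) B :=
      Finset.sum_congr rfl fun i _ => mul_comm _ _
    have c2 : ∑ x : Fin g, (m (X (Sum.inl x))) B * (m A) (X (Sum.inr x))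
        = ∑ x : Fin g, (m A) (X (Sum.inr x)) * (m (X (Sum.inl x))) B :=
      Finset.sum_congr rfl fun i _ => mul_comm _ _
    rw [c1, c2]
    have hkey := key A B
    rw [Finset.sum_sub_distrib] at hkey
    linear_combination (6:ℂ) * hkey
  have hg0 : (2*(g:ℂ) - 2) ≠ 0 := by
    intro h
    have h2 : (g:ℂ) = 1 := by linear_combination h/2
    have h3 : g = 1 := by exact_mod_cast h2
    omega
  rw [main, hpH, hpH]
  simp only [map_smul, LinearMap.smul_apply, smul_eq_mul]
  rw [hmc ![Z1,Z2,Z3] ![W1,W2,W3]]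
  field_simp
  ring
end
end

section
/- (Lemma 5.2 of the paper.) Assume g ≥ 2. For all decomposable elements z = Z_1 ∧ Z_2 ∧ Z_3 and w = W_1 ∧ W_2 ∧ W_3 of ⋀³H, with z^H := q_H(p_H(z)) and w^H := q_H(p_H(w)), one has M̂(ι(z − z^H) ⊗ ι(w − w^H)) = M_2(z ⊗ w) − (3/(2g−2)) M_1(z ⊗ w). -/
open TensorProduct

noncomputable section

section Helpers

variable {H : Type*} [AddCommGroup H] [Module ℂ H]

lemma perm3_univ : (Finset.univ : Finset (Equiv.Perm (Fin 3))) =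
    {1, Equiv.swap 0 1, Equiv.swap 0 2, Equiv.swap 1 2,
      Equiv.swap 0 1 * Equiv.swap 1 2, Equiv.swap 1 2 * Equiv.swap 0 1} := by decide

lemma iota_expand (ι : ⋀[ℂ]^3 H →ₗ[ℂ] H ⊗[ℂ] (H ⊗[ℂ] H))
    (hι : ∀ v : Fin 3 → H, ι (wedge3 v) =
      ∑ σ : Equiv.Perm (Fin 3),
        (Equiv.Perm.sign σ : ℤ) • (v (σ 0) ⊗ₜ[ℂ] (v (σ 1) ⊗ₜ[ℂ] v (σ 2))))
    (a b c : H) :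
    ι (wedge3 ![a, b, c]) =
      a ⊗ₜ[ℂ] (b ⊗ₜ[ℂ] c) - a ⊗ₜ[ℂ] (c ⊗ₜ[ℂ] b) - b ⊗ₜ[ℂ] (a ⊗ₜ[ℂ] c)
        + b ⊗ₜ[ℂ] (c ⊗ₜ[ℂ] a) + c ⊗ₜ[ℂ] (a ⊗ₜ[ℂ] b) - c ⊗ₜ[ℂ] (b ⊗ₜ[ℂ] a) := by
  rw [hι, perm3_univ]
  rw [Finset.sum_insert (by decide), Finset.sum_insert (by decide),
    Finset.sum_insert (by decide), Finset.sum_insert (by decide),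
    Finset.sum_insert (by decide), Finset.sum_singleton]
  have s1 : Equiv.Perm.sign (1 : Equiv.Perm (Fin 3)) = 1 := by decide
  have s2 : Equiv.Perm.sign (Equiv.swap (0:Fin 3) 1) = -1 := by decide
  have s3 : Equiv.Perm.sign (Equiv.swap (0:Fin 3) 2) = -1 := by decide
  have s4 : Equiv.Perm.sign (Equiv.swap (1:Fin 3) 2) = -1 := by decide
  have s5 : Equiv.Perm.sign (Equiv.swap (0:Fin 3) 1 * Equiv.swap 1 2) = 1 := by decide
  have s6 : Equiv.Perm.sign (Equiv.swap (1:Fin 3) 2 * Equiv.swap 0 1) = 1 := by decide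
  rw [s1, s2, s3, s4, s5, s6]
  simp only [Equiv.Perm.one_apply, show (Equiv.swap (0:Fin 3) 1) 0 = 1 from by decide,
    show (Equiv.swap (0:Fin 3) 1) 1 = 0 from by decide,
    show (Equiv.swap (0:Fin 3) 1) 2 = 2 from by decide,
    show (Equiv.swap (0:Fin 3) 2) 0 = 2 from by decide,
    show (Equiv.swap (0:Fin 3) 2) 1 = 1 from by decide,
    show (Equiv.swap (0:Fin 3) 2) 2 = 0 from by decide,
    show (Equiv.swap (1:Fin 3) 2) 0 = 0 from by decide,
    show (Equiv.swap (1:Fin 3) 2) 1 = 2 from by decide,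
    show (Equiv.swap (1:Fin 3) 2) 2 = 1 from by decide,
    show ((Equiv.swap (0:Fin 3) 1 * Equiv.swap 1 2 : Equiv.Perm (Fin 3))) 0 = 1 from by decide,
    show ((Equiv.swap (0:Fin 3) 1 * Equiv.swap 1 2 : Equiv.Perm (Fin 3))) 1 = 2 from by decide,
    show ((Equiv.swap (0:Fin 3) 1 * Equiv.swap 1 2 : Equiv.Perm (Fin 3))) 2 = 0 from by decide,
    show ((Equiv.swap (1:Fin 3) 2 * Equiv.swap 0 1 : Equiv.Perm (Fin 3))) 0 = 2 from by decide,
    show ((Equiv.swap (1:Fin 3) 2 * Equiv.swap 0 1 : Equiv.Perm (Fin 3))) 1 = 0 from by decide,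
    show ((Equiv.swap (1:Fin 3) 2 * Equiv.swap 0 1 : Equiv.Perm (Fin 3))) 2 = 1 from by decide,
    Matrix.cons_val_zero, Matrix.cons_val_one, Matrix.head_cons,
    Units.val_one, Units.val_neg, one_smul, neg_smul]
  norm_num [Matrix.cons_val_succ]
  simp only [Matrix.cons_val_two, Matrix.tail_cons, Matrix.head_cons, Matrix.cons_val_one, Matrix.cons_val_zero, neg_one_zsmul, Units.val_neg, Units.val_one, neg_smul, one_smul]
  abel

lemma skew (m : H →ₗ[ℂ] H →ₗ[ℂ] ℂ) (halt : ∀ x : H, m x x = 0) (x y : H) :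
    m x y = - m y x := by
  have h := halt (x + y)
  simp [map_add, halt] at h
  linear_combination h

lemma mstar (m : H →ₗ[ℂ] H →ₗ[ℂ] ℂ) (a b c x : H) :
    m (m b c • a + m c a • b + m a b • c) x
      = m b c * m a x + m c a * m b x + m a b * m c x := by
  simp [map_add, map_smul, smul_eq_mul]

lemma mstar' (m : H →ₗ[ℂ] H →ₗ[ℂ] ℂ) (x d e f : H) :
    m x (m e f • d + m f d • e + m d e • f)
      = m e f * m x d + m f d * m x e + m d e * m x f := by
  simp [map_add, map_smul, smul_eq_mul]

lemma keyK {g : ℕ} (m : H →ₗ[ℂ] H →ₗ[ℂ] ℂ) (halt : ∀ x : H, m x x = 0)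
    (X : Module.Basis (Fin g ⊕ Fin g) ℂ H)
    (hX1 : ∀ i j, m (X (Sum.inl i)) (X (Sum.inr j)) = if i = j then 1 else 0)
    (hX2 : ∀ i j, m (X (Sum.inl i)) (X (Sum.inl j)) = 0)
    (hX3 : ∀ i j, m (X (Sum.inr i)) (X (Sum.inr j)) = 0)
    (A B : H) :
    ∑ i : Fin g, (m A (X (Sum.inl i)) * m B (X (Sum.inr i))
      - m A (X (Sum.inr i)) * m B (X (Sum.inl i))) = m A B := by
  have hX1' : ∀ i j, m (X (Sum.inr i)) (X (Sum.inl j)) = if j = i then -1 else 0 := by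
    intro i j
    rw [skew m halt, hX1]
    split <;> simp
  let L : H →ₗ[ℂ] H →ₗ[ℂ] ℂ := LinearMap.mk₂ ℂ
    (fun A B => ∑ i : Fin g, (m A (X (Sum.inl i)) * m B (X (Sum.inr i))
      - m A (X (Sum.inr i)) * m B (X (Sum.inl i))))
    (by intro x y z
        rw [← Finset.sum_add_distrib]
        exact Finset.sum_congr rfl fun i _ => by
          simp only [map_add, LinearMap.add_apply]; ring)
    (by intro r x y
        rw [Finset.smul_sum]
        exact Finset.sum_congr rfl fun i _ => by
          simp only [map_smul, LinearMap.smul_apply, smul_eq_mul]; ring)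
    (by intro x y z
        rw [← Finset.sum_add_distrib]
        exact Finset.sum_congr rfl fun i _ => by
          simp only [map_add, LinearMap.add_apply]; ring)
    (by intro r x y
        rw [Finset.smul_sum]
        exact Finset.sum_congr rfl fun i _ => by
          simp only [map_smul, LinearMap.smul_apply, smul_eq_mul]; ring)
  have hL : L = m := by
    refine X.ext fun i => X.ext fun j => ?_
    have hLd : L (X i) (X j) = ∑ k : Fin g,
        (m (X i) (X (Sum.inl k)) * m (X j) (X (Sum.inr k))
          - m (X i) (X (Sum.inr k)) * m (X j) (X (Sum.inl k))) := rfl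
    rw [hLd]
    rcases i with i | i <;> rcases j with j | j <;>
      simp [hX1, hX2, hX3, hX1', mul_ite, ite_mul, Finset.sum_ite_eq,
        Finset.sum_ite_eq', eq_comm]
  calc ∑ i : Fin g, (m A (X (Sum.inl i)) * m B (X (Sum.inr i))
        - m A (X (Sum.inr i)) * m B (X (Sum.inl i))) = L A B := rfl
    _ = m A B := by rw [hL]

lemma M2closed (m : H →ₗ[ℂ] H →ₗ[ℂ] ℂ)
    (ι : ⋀[ℂ]^3 H →ₗ[ℂ] H ⊗[ℂ] (H ⊗[ℂ] H))
    (hι : ∀ v : Fin 3 → H, ι (wedge3 v) =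
      ∑ σ : Equiv.Perm (Fin 3),
        (Equiv.Perm.sign σ : ℤ) • (v (σ 0) ⊗ₜ[ℂ] (v (σ 1) ⊗ₜ[ℂ] v (σ 2))))
    (Mhat : (H ⊗[ℂ] (H ⊗[ℂ] H)) ⊗[ℂ] (H ⊗[ℂ] (H ⊗[ℂ] H)) →ₗ[ℂ] ℂ)
    (hMhat : ∀ Z1 Z2 Z3 W1 W2 W3 : H,
      Mhat ((Z1 ⊗ₜ[ℂ] (Z2 ⊗ₜ[ℂ] Z3)) ⊗ₜ[ℂ] (W1 ⊗ₜ[ℂ] (W2 ⊗ₜ[ℂ] W3)))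
        = m Z1 W1 * m Z2 W2 * m Z3 W3)
    (a b c d e f : H) :
    Mhat (ι (wedge3 ![a, b, c]) ⊗ₜ[ℂ] ι (wedge3 ![d, e, f])) =
      6 * ( m a d * (m b e * m c f - m b f * m c e)
          - m a e * (m b d * m c f - m b f * m c d)
          + m a f * (m b d * m c e - m b e * m c d) ) := by
  rw [iota_expand ι hι a b c, iota_expand ι hι d e f]
  simp only [tmul_sub, sub_tmul, tmul_add, add_tmul, map_sub, map_add, hMhat]
  ring

lemma M1closed (m : H →ₗ[ℂ] H →ₗ[ℂ] ℂ) (halt : ∀ x : H, m x x = 0)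
    (ι : ⋀[ℂ]^3 H →ₗ[ℂ] H ⊗[ℂ] (H ⊗[ℂ] H))
    (hι : ∀ v : Fin 3 → H, ι (wedge3 v) =
      ∑ σ : Equiv.Perm (Fin 3),
        (Equiv.Perm.sign σ : ℤ) • (v (σ 0) ⊗ₜ[ℂ] (v (σ 1) ⊗ₜ[ℂ] v (σ 2))))
    (mmm : (H ⊗[ℂ] (H ⊗[ℂ] H)) ⊗[ℂ] (H ⊗[ℂ] (H ⊗[ℂ] H)) →ₗ[ℂ] ℂ)
    (hmmm : ∀ v1 v2 v3 v4 v5 v6 : H,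
      mmm ((v1 ⊗ₜ[ℂ] (v2 ⊗ₜ[ℂ] v3)) ⊗ₜ[ℂ] (v4 ⊗ₜ[ℂ] (v5 ⊗ₜ[ℂ] v6)))
        = m v1 v2 * m v3 v4 * m v5 v6)
    (a b c d e f : H) :
    mmm (ι (wedge3 ![a, b, c]) ⊗ₜ[ℂ] ι (wedge3 ![d, e, f])) =
      4 * (m b c * (m e f * m a d + m f d * m a e + m d e * m a f)
         + m c a * (m e f * m b d + m f d * m b e + m d e * m b f)
         + m a b * (m e f * m c d + m f d * m c e + m d e * m c f)) := by
  rw [iota_expand ι hι a b c, iota_expand ι hι d e f]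
  simp only [tmul_sub, sub_tmul, tmul_add, add_tmul, map_sub, map_add, hmmm]
  rw [skew m halt b a, skew m halt c a, skew m halt c b,
    skew m halt e d, skew m halt f d, skew m halt f e]
  ring

lemma E1 {g : ℕ} (m : H →ₗ[ℂ] H →ₗ[ℂ] ℂ) (halt : ∀ x : H, m x x = 0)
    (X : Module.Basis (Fin g ⊕ Fin g) ℂ H)
    (hX1 : ∀ i j, m (X (Sum.inl i)) (X (Sum.inr j)) = if i = j then 1 else 0)
    (hX2 : ∀ i j, m (X (Sum.inl i)) (X (Sum.inl j)) = 0)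
    (hX3 : ∀ i j, m (X (Sum.inr i)) (X (Sum.inr j)) = 0)
    (ι : ⋀[ℂ]^3 H →ₗ[ℂ] H ⊗[ℂ] (H ⊗[ℂ] H))
    (hι : ∀ v : Fin 3 → H, ι (wedge3 v) =
      ∑ σ : Equiv.Perm (Fin 3),
        (Equiv.Perm.sign σ : ℤ) • (v (σ 0) ⊗ₜ[ℂ] (v (σ 1) ⊗ₜ[ℂ] v (σ 2))))
    (Mhat : (H ⊗[ℂ] (H ⊗[ℂ] H)) ⊗[ℂ] (H ⊗[ℂ] (H ⊗[ℂ] H)) →ₗ[ℂ] ℂ)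
    (hMhat : ∀ Z1 Z2 Z3 W1 W2 W3 : H,
      Mhat ((Z1 ⊗ₜ[ℂ] (Z2 ⊗ₜ[ℂ] Z3)) ⊗ₜ[ℂ] (W1 ⊗ₜ[ℂ] (W2 ⊗ₜ[ℂ] W3)))
        = m Z1 W1 * m Z2 W2 * m Z3 W3)
    (qH : H → ⋀[ℂ]^3 H)
    (hqH : ∀ Z : H, qH Z = ∑ i : Fin g, wedge3 ![Z, X (Sum.inl i), X (Sum.inr i)])
    (a b c W' : H) :
    Mhat (ι (wedge3 ![a, b, c]) ⊗ₜ[ℂ] ι (qH W')) =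
      6 * (m b c * m a W' + m c a * m b W' + m a b * m c W') := by
  rw [hqH, map_sum, tmul_sum, map_sum]
  have step : ∀ i : Fin g,
      Mhat (ι (wedge3 ![a, b, c]) ⊗ₜ[ℂ]
        ι (wedge3 ![W', X (Sum.inl i), X (Sum.inr i)])) =
      6 * m a W' * (m b (X (Sum.inl i)) * m c (X (Sum.inr i))
          - m b (X (Sum.inr i)) * m c (X (Sum.inl i)))
        - 6 * m b W' * (m a (X (Sum.inl i)) * m c (X (Sum.inr i))
          - m a (X (Sum.inr i)) * m c (X (Sum.inl i)))
        + 6 * m c W' * (m a (X (Sum.inl i)) * m b (X (Sum.inr i))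
          - m a (X (Sum.inr i)) * m b (X (Sum.inl i))) := fun i => by
    rw [M2closed m ι hι Mhat hMhat]
    ring
  rw [Finset.sum_congr rfl fun i _ => step i]
  rw [Finset.sum_add_distrib, Finset.sum_sub_distrib,
    ← Finset.mul_sum, ← Finset.mul_sum, ← Finset.mul_sum,
    keyK m halt X hX1 hX2 hX3 b c, keyK m halt X hX1 hX2 hX3 a c,
    keyK m halt X hX1 hX2 hX3 a b, skew m halt c a]
  ring

lemma E2 {g : ℕ} (m : H →ₗ[ℂ] H →ₗ[ℂ] ℂ) (halt : ∀ x : H, m x x = 0)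
    (X : Module.Basis (Fin g ⊕ Fin g) ℂ H)
    (hX1 : ∀ i j, m (X (Sum.inl i)) (X (Sum.inr j)) = if i = j then 1 else 0)
    (hX2 : ∀ i j, m (X (Sum.inl i)) (X (Sum.inl j)) = 0)
    (hX3 : ∀ i j, m (X (Sum.inr i)) (X (Sum.inr j)) = 0)
    (ι : ⋀[ℂ]^3 H →ₗ[ℂ] H ⊗[ℂ] (H ⊗[ℂ] H))
    (hι : ∀ v : Fin 3 → H, ι (wedge3 v) =
      ∑ σ : Equiv.Perm (Fin 3),
        (Equiv.Perm.sign σ : ℤ) • (v (σ 0) ⊗ₜ[ℂ] (v (σ 1) ⊗ₜ[ℂ] v (σ 2))))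
    (Mhat : (H ⊗[ℂ] (H ⊗[ℂ] H)) ⊗[ℂ] (H ⊗[ℂ] (H ⊗[ℂ] H)) →ₗ[ℂ] ℂ)
    (hMhat : ∀ Z1 Z2 Z3 W1 W2 W3 : H,
      Mhat ((Z1 ⊗ₜ[ℂ] (Z2 ⊗ₜ[ℂ] Z3)) ⊗ₜ[ℂ] (W1 ⊗ₜ[ℂ] (W2 ⊗ₜ[ℂ] W3)))
        = m Z1 W1 * m Z2 W2 * m Z3 W3)
    (qH : H → ⋀[ℂ]^3 H)
    (hqH : ∀ Z : H, qH Z = ∑ i : Fin g, wedge3 ![Z, X (Sum.inl i), X (Sum.inr i)])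
    (Z' d e f : H) :
    Mhat (ι (qH Z') ⊗ₜ[ℂ] ι (wedge3 ![d, e, f])) =
      6 * (m e f * m Z' d + m f d * m Z' e + m d e * m Z' f) := by
  rw [hqH, map_sum, sum_tmul, map_sum]
  have step : ∀ i : Fin g,
      Mhat (ι (wedge3 ![Z', X (Sum.inl i), X (Sum.inr i)]) ⊗ₜ[ℂ]
        ι (wedge3 ![d, e, f])) =
      6 * m Z' d * (m e (X (Sum.inl i)) * m f (X (Sum.inr i))
          - m e (X (Sum.inr i)) * m f (X (Sum.inl i)))
        - 6 * m Z' e * (m d (X (Sum.inl i)) * m f (X (Sum.inr i))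
          - m d (X (Sum.inr i)) * m f (X (Sum.inl i)))
        + 6 * m Z' f * (m d (X (Sum.inl i)) * m e (X (Sum.inr i))
          - m d (X (Sum.inr i)) * m e (X (Sum.inl i))) := fun i => by
    rw [M2closed m ι hι Mhat hMhat]
    rw [skew m halt (X (Sum.inl i)) d, skew m halt (X (Sum.inl i)) e,
      skew m halt (X (Sum.inl i)) f, skew m halt (X (Sum.inr i)) d,
      skew m halt (X (Sum.inr i)) e, skew m halt (X (Sum.inr i)) f]
    ring
  rw [Finset.sum_congr rfl fun i _ => step i]
  rw [Finset.sum_add_distrib, Finset.sum_sub_distrib,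
    ← Finset.mul_sum, ← Finset.mul_sum, ← Finset.mul_sum,
    keyK m halt X hX1 hX2 hX3 e f, keyK m halt X hX1 hX2 hX3 d f,
    keyK m halt X hX1 hX2 hX3 d e, skew m halt f d]
  ring

lemma E3 {g : ℕ} (m : H →ₗ[ℂ] H →ₗ[ℂ] ℂ) (halt : ∀ x : H, m x x = 0)
    (X : Module.Basis (Fin g ⊕ Fin g) ℂ H)
    (hX1 : ∀ i j, m (X (Sum.inl i)) (X (Sum.inr j)) = if i = j then 1 else 0)
    (hX2 : ∀ i j, m (X (Sum.inl i)) (X (Sum.inl j)) = 0)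
    (hX3 : ∀ i j, m (X (Sum.inr i)) (X (Sum.inr j)) = 0)
    (ι : ⋀[ℂ]^3 H →ₗ[ℂ] H ⊗[ℂ] (H ⊗[ℂ] H))
    (hι : ∀ v : Fin 3 → H, ι (wedge3 v) =
      ∑ σ : Equiv.Perm (Fin 3),
        (Equiv.Perm.sign σ : ℤ) • (v (σ 0) ⊗ₜ[ℂ] (v (σ 1) ⊗ₜ[ℂ] v (σ 2))))
    (Mhat : (H ⊗[ℂ] (H ⊗[ℂ] H)) ⊗[ℂ] (H ⊗[ℂ] (H ⊗[ℂ] H)) →ₗ[ℂ] ℂ)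
    (hMhat : ∀ Z1 Z2 Z3 W1 W2 W3 : H,
      Mhat ((Z1 ⊗ₜ[ℂ] (Z2 ⊗ₜ[ℂ] Z3)) ⊗ₜ[ℂ] (W1 ⊗ₜ[ℂ] (W2 ⊗ₜ[ℂ] W3)))
        = m Z1 W1 * m Z2 W2 * m Z3 W3)
    (qH : H → ⋀[ℂ]^3 H)
    (hqH : ∀ Z : H, qH Z = ∑ i : Fin g, wedge3 ![Z, X (Sum.inl i), X (Sum.inr i)])
    (Z' W' : H) :
    Mhat (ι (qH Z') ⊗ₜ[ℂ] ι (qH W')) = 6 * ((g : ℂ) - 1) * m Z' W' := by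
  conv_lhs => rw [hqH Z']
  rw [map_sum, sum_tmul, map_sum]
  have step : ∀ i : Fin g,
      Mhat (ι (wedge3 ![Z', X (Sum.inl i), X (Sum.inr i)]) ⊗ₜ[ℂ] ι (qH W')) =
      6 * m Z' W' + 6 * (m W' (X (Sum.inl i)) * m Z' (X (Sum.inr i))
        - m W' (X (Sum.inr i)) * m Z' (X (Sum.inl i))) := fun i => by
    rw [E1 m halt X hX1 hX2 hX3 ι hι Mhat hMhat qH hqH, hX1 i i]
    rw [skew m halt (X (Sum.inr i)) Z', skew m halt (X (Sum.inl i)) W',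
      skew m halt (X (Sum.inr i)) W']
    norm_num
    ring
  rw [Finset.sum_congr rfl fun i _ => step i]
  rw [Finset.sum_add_distrib, Finset.sum_const, ← Finset.mul_sum,
    keyK m halt X hX1 hX2 hX3 W' Z', skew m halt W' Z', Finset.card_univ,
    Fintype.card_fin, nsmul_eq_mul]
  ring

lemma L1c12 (m : H →ₗ[ℂ] H →ₗ[ℂ] ℂ) (halt : ∀ x : H, m x x = 0)
    (c12 : H ⊗[ℂ] (H ⊗[ℂ] H) →ₗ[ℂ] H)
    (hc12 : ∀ Z1 Z2 Z3 : H, c12 (Z1 ⊗ₜ[ℂ] (Z2 ⊗ₜ[ℂ] Z3)) = m Z1 Z2 • Z3)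
    (ι : ⋀[ℂ]^3 H →ₗ[ℂ] H ⊗[ℂ] (H ⊗[ℂ] H))
    (hι : ∀ v : Fin 3 → H, ι (wedge3 v) =
      ∑ σ : Equiv.Perm (Fin 3),
        (Equiv.Perm.sign σ : ℤ) • (v (σ 0) ⊗ₜ[ℂ] (v (σ 1) ⊗ₜ[ℂ] v (σ 2))))
    (a b c : H) :
    c12 (ι (wedge3 ![a, b, c])) = (2 : ℂ) • (m b c • a + m c a • b + m a b • c) := by
  rw [iota_expand ι hι a b c]
  simp only [map_sub, map_add, hc12]
  rw [skew m halt b a, skew m halt c b, skew m halt a c]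
  module

end Helpers

/-- Lemma 5.2 of the paper: assume `g ≥ 2`.  For all decomposable
`z = Z₁ ∧ Z₂ ∧ Z₃` and `w = W₁ ∧ W₂ ∧ W₃` in `⋀³H`, with `z^H := q_H(p_H(z))` and
`w^H := q_H(p_H(w))`, one has `M̂(ι(z − z^H) ⊗ ι(w − w^H)) = M₂(z ⊗ w) − (3/(2g−2)) M₁(z ⊗ w)`,
where `M₁(z ⊗ w) = (m ⊗ m ⊗ m)(ι(z) ⊗ ι(w))` and `M₂(z ⊗ w) = M̂(ι(z) ⊗ ι(w))`. -/
theorem stmt11 {H : Type*} [AddCommGroup H] [Module ℂ H] {g : ℕ} (hg : 2 ≤ g)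
    (m : H →ₗ[ℂ] H →ₗ[ℂ] ℂ) (halt : ∀ x : H, m x x = 0)
    (X : Module.Basis (Fin g ⊕ Fin g) ℂ H)
    (hX1 : ∀ i j, m (X (Sum.inl i)) (X (Sum.inr j)) = if i = j then 1 else 0)
    (hX2 : ∀ i j, m (X (Sum.inl i)) (X (Sum.inl j)) = 0)
    (hX3 : ∀ i j, m (X (Sum.inr i)) (X (Sum.inr j)) = 0)
    -- `(m ⊗ id_H) : H^{⊗3} → H`, contraction of the first two tensor factors by `m`
    (c12 : H ⊗[ℂ] (H ⊗[ℂ] H) →ₗ[ℂ] H)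
    (hc12 : ∀ Z1 Z2 Z3 : H, c12 (Z1 ⊗ₜ[ℂ] (Z2 ⊗ₜ[ℂ] Z3)) = m Z1 Z2 • Z3)
    -- the embedding `ι : ⋀³H → H^{⊗3}`
    (ι : ⋀[ℂ]^3 H →ₗ[ℂ] H ⊗[ℂ] (H ⊗[ℂ] H))
    (hι : ∀ v : Fin 3 → H, ι (wedge3 v) =
      ∑ σ : Equiv.Perm (Fin 3),
        (Equiv.Perm.sign σ : ℤ) • (v (σ 0) ⊗ₜ[ℂ] (v (σ 1) ⊗ₜ[ℂ] v (σ 2))))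
    -- the linear map `M̂ : H^{⊗6} → ℂ` with `M̂(Z₁⊗Z₂⊗Z₃⊗W₁⊗W₂⊗W₃) = (Z₁·W₁)(Z₂·W₂)(Z₃·W₃)`
    (Mhat : (H ⊗[ℂ] (H ⊗[ℂ] H)) ⊗[ℂ] (H ⊗[ℂ] (H ⊗[ℂ] H)) →ₗ[ℂ] ℂ)
    (hMhat : ∀ Z1 Z2 Z3 W1 W2 W3 : H,
      Mhat ((Z1 ⊗ₜ[ℂ] (Z2 ⊗ₜ[ℂ] Z3)) ⊗ₜ[ℂ] (W1 ⊗ₜ[ℂ] (W2 ⊗ₜ[ℂ] W3)))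
        = m Z1 W1 * m Z2 W2 * m Z3 W3)
    -- the linear map `m ⊗ m ⊗ m : H^{⊗6} → ℂ` with
    -- `(m ⊗ m ⊗ m)(v₁ ⊗ ⋯ ⊗ v₆) = (v₁·v₂)(v₃·v₄)(v₅·v₆)`, so that
    -- `M₁(z ⊗ w) = (m ⊗ m ⊗ m)(ι(z) ⊗ ι(w))`
    (mmm : (H ⊗[ℂ] (H ⊗[ℂ] H)) ⊗[ℂ] (H ⊗[ℂ] (H ⊗[ℂ] H)) →ₗ[ℂ] ℂ)
    (hmmm : ∀ v1 v2 v3 v4 v5 v6 : H,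
      mmm ((v1 ⊗ₜ[ℂ] (v2 ⊗ₜ[ℂ] v3)) ⊗ₜ[ℂ] (v4 ⊗ₜ[ℂ] (v5 ⊗ₜ[ℂ] v6)))
        = m v1 v2 * m v3 v4 * m v5 v6)
    -- `q_H : H → ⋀³H`, `q_H(Z) = Z ∧ I = Σᵢ Z ∧ Xᵢ ∧ X_{g+i}`
    (qH : H → ⋀[ℂ]^3 H)
    (hqH : ∀ Z : H, qH Z = ∑ i : Fin g, wedge3 ![Z, X (Sum.inl i), X (Sum.inr i)])
    -- `p_H : ⋀³H → H`, `p_H(z) = (1/(2g−2)) (m ⊗ id_H)(ι(z))`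
    (pH : ⋀[ℂ]^3 H → H)
    (hpH : ∀ z : ⋀[ℂ]^3 H, pH z = (1 / (2 * (g : ℂ) - 2)) • c12 (ι z))
    (Z1 Z2 Z3 W1 W2 W3 : H) :
    Mhat (ι (wedge3 ![Z1, Z2, Z3] - qH (pH (wedge3 ![Z1, Z2, Z3])))
        ⊗ₜ[ℂ] ι (wedge3 ![W1, W2, W3] - qH (pH (wedge3 ![W1, W2, W3]))))
      = Mhat (ι (wedge3 ![Z1, Z2, Z3]) ⊗ₜ[ℂ] ι (wedge3 ![W1, W2, W3]))
        - (3 / (2 * (g : ℂ) - 2)) * mmm (ι (wedge3 ![Z1, Z2, Z3]) ⊗ₜ[ℂ] ι (wedge3 ![W1, W2, W3])) := by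
  have hne : (2 * (g : ℂ) - 2) ≠ 0 := by
    intro h
    have h1 : ((g : ℕ) : ℂ) = ((1 : ℕ) : ℂ) := by push_cast; linear_combination h / 2
    have := Nat.cast_injective (R := ℂ) h1
    omega
  set t : ℂ := (1 / (2 * (g : ℂ) - 2)) * 2 with ht
  set Zs : H := m Z2 Z3 • Z1 + m Z3 Z1 • Z2 + m Z1 Z2 • Z3 with hZs
  set Ws : H := m W2 W3 • W1 + m W3 W1 • W2 + m W1 W2 • W3 with hWs
  have hpz : pH (wedge3 ![Z1, Z2, Z3]) = t • Zs := by
    rw [hpH, L1c12 m halt c12 hc12 ι hι, smul_smul]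
  have hpw : pH (wedge3 ![W1, W2, W3]) = t • Ws := by
    rw [hpH, L1c12 m halt c12 hc12 ι hι, smul_smul]
  rw [hpz, hpw, map_sub, map_sub, sub_tmul, tmul_sub, tmul_sub, map_sub, map_sub, map_sub]
  have A1 : Mhat (ι (wedge3 ![Z1, Z2, Z3]) ⊗ₜ[ℂ] ι (qH (t • Ws))) = 6 * (t * m Zs Ws) := by
    rw [E1 m halt X hX1 hX2 hX3 ι hι Mhat hMhat qH hqH, mstar m Z1 Z2 Z3 Ws]
    simp only [map_smul, smul_eq_mul]
    ring
  have A2 : Mhat (ι (qH (t • Zs)) ⊗ₜ[ℂ] ι (wedge3 ![W1, W2, W3])) = 6 * (t * m Zs Ws) := by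
    rw [E2 m halt X hX1 hX2 hX3 ι hι Mhat hMhat qH hqH, mstar' m Zs W1 W2 W3]
    simp only [map_smul, LinearMap.smul_apply, smul_eq_mul]
    ring
  have A3 : Mhat (ι (qH (t • Zs)) ⊗ₜ[ℂ] ι (qH (t • Ws))) =
      6 * ((g : ℂ) - 1) * (t * (t * m Zs Ws)) := by
    rw [E3 m halt X hX1 hX2 hX3 ι hι Mhat hMhat qH hqH]
    simp only [map_smul, LinearMap.smul_apply, smul_eq_mul]
    try ring
  have A4 : mmm (ι (wedge3 ![Z1, Z2, Z3]) ⊗ₜ[ℂ] ι (wedge3 ![W1, W2, W3])) =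
      4 * m Zs Ws := by
    rw [M1closed m halt ι hι mmm hmmm, mstar m Z1 Z2 Z3 Ws,
      mstar' m Z1 W1 W2 W3, mstar' m Z2 W1 W2 W3, mstar' m Z3 W1 W2 W3]
    try ring
  rw [A1, A2, A3, A4]
  have hgc : 2 * (g : ℂ) - 2 = 2 * ((g : ℂ) - 1) := by ring
  have hg1 : (g : ℂ) - 1 ≠ 0 := by
    intro h; apply hne; rw [hgc, h, mul_zero]
  rw [ht]
  field_simp [ht]
  ring
end
end
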